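/- (Duopoly equilibrium with decision conflict) Fix I > 0. For reals q, p with 0 ≤ q ≤ p ≤ I, define a firm's profit against the opponent strategy (I/2, I) by π(q,p) = ((q/p)/((q/p) + 1/2))² · (p − q), with the convention q/p = 0 when p = 0. Then π(q,p) ≤ I/8 for all such (q,p), and π(I/2, I) = I/8; that is, the symmetric profile in which both firms play (q,p) = (I/2, I) is a Nash equilibrium of the simultaneous price-quality game with quadratic-logit demand, and each firm's equilibrium expected profit equals I/8. -/

import Mathlib

/-- Duopoly equilibrium with decision conflict: against an opponent playing `(I/2, I)`,
every feasible strategy `(q,p)` yields profit at most `I/8` under quadratic-logit demand,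
and `(I/2, I)` attains this bound, so the symmetric profile `(I/2, I)` is a Nash
equilibrium with equilibrium expected profit `I/8` for each firm. -/
theorem stmt14 (I : ℝ) (hI : 0 < I) :
    (∀ q p : ℝ, 0 ≤ q → q ≤ p → p ≤ I →
      ((q / p) / (q / p + 1 / 2)) ^ 2 * (p - q) ≤ I / 8) ∧
    (((I / 2) / I) / ((I / 2) / I + 1 / 2)) ^ 2 * (I - I / 2) = I / 8 := by
  constructor
  · intro q p hq hqp hpI
    rcases eq_or_lt_of_le (hq.trans hqp) with hp | hp
    · have hq0 : q = 0 := le_antisymm (hp ▸ hqp) hq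
      simp [← hp, hq0]
      positivity
    · have h2 : (0:ℝ) < 2 * q + p := by linarith
      have hne : (q / p) / (q / p + 1 / 2) = 2 * q / (2 * q + p) := by
        have hd : (0:ℝ) < q / p + 1 / 2 := by positivity
        field_simp
      rw [hne, div_pow, div_mul_eq_mul_div, div_le_iff₀ (by positivity)]
      nlinarith [mul_nonneg (sq_nonneg (2 * q - p)) (show (0:ℝ) ≤ 8 * q + p by linarith),
        mul_nonneg (sub_nonneg.2 hpI) (sq_nonneg (2 * q + p))]
  · have : I / 2 / I = 1 / 2 := by
      field_simp
    rw [this]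
    ring
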